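/- (Bound on the term A₁₂ in the proof of Lemma 2.) Let f : ℝ^d → ℝ be μ-strongly convex with L-Lipschitz gradient and minimizer x* (so ∇f(x*) = 0). Then for any points x̄, x_l ∈ ℝ^d: 2∇f(x̄)ᵀ(x* − x̄) ≤ 2(f(x*) − f(x_l)) − (3μ/4)‖x* − x̄‖² + (L + 4L²/μ)‖x_l − x̄‖². -/

import Mathlib

open scoped RealInnerProductSpace

/-- Descent lemma: a function with `L`-Lipschitz gradient satisfies
`f x ≤ f y + ⟪∇f y, x - y⟫ + L/2 ‖x - y‖²`. -/
lemma descent_lemma_aux {E : Type*} [NormedAddCommGroup E] [InnerProductSpace ℝ E] [CompleteSpace E]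
    (L : ℝ) (f : E → ℝ) (hdiff : Differentiable ℝ f)
    (hlip : ∀ x y, ‖gradient f x - gradient f y‖ ≤ L * ‖x - y‖)
    (x y : E) : f x ≤ f y + ⟪gradient f y, x - y⟫ + L / 2 * ‖x - y‖ ^ 2 := by
  set v := x - y with hv
  set ψ : ℝ → ℝ := fun t => f (y + t • v) - t * ⟪gradient f y, v⟫ - L * t ^ 2 / 2 * ‖v‖ ^ 2
    with hψ
  have hline : ∀ t : ℝ, HasDerivAt (fun s : ℝ => y + s • v) v t := by
    intro t
    simpa using ((hasDerivAt_id t).smul_const v).const_add y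
  have hd : ∀ t : ℝ, HasDerivAt ψ
      (⟪gradient f (y + t • v), v⟫ - ⟪gradient f y, v⟫ - L * t * ‖v‖ ^ 2) t := by
    intro t
    have h1 : HasDerivAt (fun s : ℝ => f (y + s • v)) ⟪gradient f (y + t • v), v⟫ t := by
      have hf := (hdiff (y + t • v)).hasGradientAt.hasFDerivAt
      simpa [InnerProductSpace.toDual_apply_apply, Function.comp_def] using hf.comp_hasDerivAt t (hline t)
    have h2 : HasDerivAt (fun s : ℝ => s * ⟪gradient f y, v⟫) ⟪gradient f y, v⟫ t := by
      simpa using (hasDerivAt_id t).mul_const ⟪gradient f y, v⟫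
    have h3 : HasDerivAt (fun s : ℝ => L * s ^ 2 / 2 * ‖v‖ ^ 2) (L * t * ‖v‖ ^ 2) t := by
      have := ((hasDerivAt_pow 2 t).const_mul L).div_const 2
      have := this.mul_const (‖v‖ ^ 2)
      refine this.congr_deriv ?_
      ring
    simpa [hψ, Pi.sub_def] using (h1.sub h2).sub h3
  have hmono : ψ 1 ≤ ψ 0 := by
    have hcont : ContinuousOn ψ (Set.Icc 0 1) :=
      fun t _ => ((hd t).differentiableAt.continuousAt).continuousWithinAt
    have hderiv : ∀ t ∈ interior (Set.Icc (0:ℝ) 1), deriv ψ t ≤ 0 := by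
      intro t ht
      rw [interior_Icc] at ht
      rw [(hd t).deriv]
      have hib : ⟪gradient f (y + t • v) - gradient f y, v⟫ ≤ L * t * ‖v‖ ^ 2 := by
        calc ⟪gradient f (y + t • v) - gradient f y, v⟫
            ≤ ‖gradient f (y + t • v) - gradient f y‖ * ‖v‖ := real_inner_le_norm _ _
          _ ≤ (L * ‖(y + t • v) - y‖) * ‖v‖ := by
              exact mul_le_mul_of_nonneg_right (hlip _ _) (norm_nonneg _)
          _ = L * t * ‖v‖ ^ 2 := by
              rw [add_sub_cancel_left, norm_smul, Real.norm_eq_abs,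
                abs_of_pos ht.1]
              ring
      have := inner_sub_left (𝕜 := ℝ) (gradient f (y + t • v)) (gradient f y) v
      linarith [hib, this.symm.le, this.le]
    have := antitoneOn_of_deriv_nonpos (convex_Icc (0:ℝ) 1) hcont
      (fun t ht => ((hd t).differentiableAt).differentiableWithinAt) hderiv
    exact this (by norm_num) (by norm_num) (by norm_num)
  have hx : y + (1:ℝ) • v = x := by
    rw [one_smul, hv]; abel
  have h0 : y + (0:ℝ) • v = y := by simp
  simp only [hψ, hx, h0] at hmono
  nlinarith [hmono]

/-- **Bound on the term `A₁₂` in the proof of Lemma 2.**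
Let `f : ℝ^d → ℝ` be `μ`-strongly convex with `L`-Lipschitz gradient and minimizer `x*`
(so `∇f(x*) = 0`).  Then for any `x̄, x_l`:
`2⟪∇f(x̄), x* − x̄⟫ ≤ 2(f(x*) − f(x_l)) − (3μ/4)‖x* − x̄‖² + (L + 4L²/μ)‖x_l − x̄‖²`. -/
theorem A12_bound
    (d : ℕ) (μ L : ℝ) (hμ : 0 < μ) (hL : 0 < L)
    (f : EuclideanSpace ℝ (Fin d) → ℝ) (hdiff : Differentiable ℝ f)
    (hsc : ∀ x y, μ / 2 * ‖x - y‖ ^ 2 ≤ f x - f y - ⟪gradient f y, x - y⟫)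
    (hlip : ∀ x y, ‖gradient f x - gradient f y‖ ≤ L * ‖x - y‖)
    (xstar : EuclideanSpace ℝ (Fin d))
    (hmin : ∀ x, f xstar ≤ f x) (hgrad0 : gradient f xstar = 0)
    (xbar xl : EuclideanSpace ℝ (Fin d)) :
    2 * ⟪gradient f xbar, xstar - xbar⟫ ≤
      2 * (f xstar - f xl) - (3 * μ / 4) * ‖xstar - xbar‖ ^ 2 +
        (L + 4 * L ^ 2 / μ) * ‖xl - xbar‖ ^ 2 := by
  set a := ‖xstar - xbar‖ with ha
  set b := ‖xl - xbar‖ with hb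
  have h1 : ⟪gradient f xbar, xstar - xbar⟫ ≤ f xstar - f xbar - μ / 2 * a ^ 2 := by
    have := hsc xstar xbar
    linarith
  have h2 : f xl ≤ f xbar + ⟪gradient f xbar, xl - xbar⟫ + L / 2 * b ^ 2 :=
    descent_lemma_aux L f hdiff hlip xl xbar
  have h3 : ⟪gradient f xbar, xl - xbar⟫ ≤ L * a * b := by
    have heq : ⟪gradient f xbar, xl - xbar⟫
        = ⟪gradient f xbar - gradient f xstar, xl - xbar⟫ := by
      rw [hgrad0, sub_zero]
    rw [heq]
    calc ⟪gradient f xbar - gradient f xstar, xl - xbar⟫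
        ≤ ‖gradient f xbar - gradient f xstar‖ * ‖xl - xbar‖ := real_inner_le_norm _ _
      _ ≤ (L * ‖xbar - xstar‖) * b := mul_le_mul_of_nonneg_right (hlip _ _) (norm_nonneg _)
      _ = L * a * b := by rw [norm_sub_rev]
  have h4 : 2 * (L * a * b) ≤ μ / 4 * a ^ 2 + 4 * L ^ 2 / μ * b ^ 2 := by
    have hkey : μ / 4 * a ^ 2 + 4 * L ^ 2 / μ * b ^ 2 - 2 * (L * a * b)
        = (μ * a - 4 * L * b) ^ 2 / (4 * μ) := by
      field_simp
      ring
    linarith [hkey, div_nonneg (sq_nonneg (μ * a - 4 * L * b))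
      (by positivity : (0:ℝ) ≤ 4 * μ)]
  linarith
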